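/- arXiv:2303.05991 — 2 statements merged into one kernel-verified Lean document; each statement's English description precedes it below -/
import Mathlib

section
/- The velocity coordinate of the reachable set of the double integrator at time t is exactly the interval [max(v_min, v₀ + u_min·t), min(v_max, v₀ + u_max·t)] when controls are restricted so the speed bound v ∈ [v_min, v_max] is maintained: every reachable velocity lies in this interval, and (assuming v₀ ∈ [v_min, v_max] and the interval is nonempty) every value in the interval is attained by a constant control. -/
open MeasureTheory intervalIntegral

/-- The velocity coordinate of the state-constrained reachable set of the
double integrator at time `t` is exactly the interval
`[max (v_min) (v₀ + u_min t), min v_max (v₀ + u_max t)]`. -/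
theorem stmt_13 (v₀ u_min u_max v_min v_max t : ℝ)
    (hu : u_min < 0) (hu' : 0 < u_max) (ht : 0 < t)
    (hv₀ : v_min ≤ v₀ ∧ v₀ ≤ v_max) :
    (∀ u : ℝ → ℝ, IntervalIntegrable u volume 0 t →
      (∀ s ∈ Set.Icc (0 : ℝ) t, u_min ≤ u s ∧ u s ≤ u_max) →
      (∀ s ∈ Set.Icc (0 : ℝ) t,
        v_min ≤ v₀ + ∫ r in (0:ℝ)..s, u r ∧ v₀ + (∫ r in (0:ℝ)..s, u r) ≤ v_max) →
      max v_min (v₀ + u_min * t) ≤ v₀ + (∫ s in (0:ℝ)..t, u s) ∧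
        v₀ + (∫ s in (0:ℝ)..t, u s) ≤ min v_max (v₀ + u_max * t)) ∧
    (∀ w : ℝ, max v_min (v₀ + u_min * t) ≤ w → w ≤ min v_max (v₀ + u_max * t) →
      ∃ c : ℝ, u_min ≤ c ∧ c ≤ u_max ∧
        (∀ s ∈ Set.Icc (0 : ℝ) t, v_min ≤ v₀ + c * s ∧ v₀ + c * s ≤ v_max) ∧
        v₀ + c * t = w) := by
  constructor
  · intro u hint hbd hst
    have htmem : t ∈ Set.Icc (0:ℝ) t := ⟨ht.le, le_refl t⟩
    have hstate := hst t htmem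
    have hlo : u_min * t ≤ ∫ s in (0:ℝ)..t, u s := by
      have : (∫ s in (0:ℝ)..t, (u_min : ℝ)) ≤ ∫ s in (0:ℝ)..t, u s := by
        apply intervalIntegral.integral_mono_on ht.le intervalIntegrable_const hint
        intro s hs; exact (hbd s hs).1
      simpa [mul_comm] using this
    have hhi : (∫ s in (0:ℝ)..t, u s) ≤ u_max * t := by
      have : (∫ s in (0:ℝ)..t, u s) ≤ ∫ s in (0:ℝ)..t, (u_max : ℝ) := by
        apply intervalIntegral.integral_mono_on ht.le hint intervalIntegrable_const
        intro s hs; exact (hbd s hs).2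
      simpa [mul_comm] using this
    constructor
    · exact max_le hstate.1 (by linarith)
    · exact le_min hstate.2 (by linarith)
  · intro w hw1 hw2
    have hwlo : v₀ + u_min * t ≤ w := le_trans (le_max_right _ _) hw1
    have hwhi : w ≤ v₀ + u_max * t := le_trans hw2 (min_le_right _ _)
    have hwmin : v_min ≤ w := le_trans (le_max_left _ _) hw1
    have hwmax : w ≤ v_max := le_trans hw2 (min_le_left _ _)
    refine ⟨(w - v₀) / t, ?_, ?_, ?_, ?_⟩
    · rw [le_div_iff₀ ht]; linarith
    · rw [div_le_iff₀ ht]; linarith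
    · intro s hs
      have h1 : 0 ≤ s := hs.1
      have h2 : s ≤ t := hs.2
      have key : v₀ + (w - v₀) / t * s = (1 - s/t) * v₀ + (s/t) * w := by
        field_simp; ring
      have hst0 : 0 ≤ s / t := div_nonneg h1 ht.le
      have hst1 : s / t ≤ 1 := (div_le_one ht).2 h2
      constructor
      · rw [key]; nlinarith [hv₀.1]
      · rw [key]; nlinarith [hv₀.2]
    · field_simp; ring
end

section
/- Extremal (velocity, position) trade-off: for the double integrator with u ∈ [u_min, u_max], if the terminal velocity v(t) = v₁ is fixed, the maximal achievable terminal position is obtained by the bang-bang control applying u_max first and then u_min (one switch), and the minimal by u_min then u_max. In particular, for fixed terminal velocity the set of achievable terminal positions is an interval. -/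
open MeasureTheory intervalIntegral

lemma bang_integrable (τ a b x y : ℝ) :
    IntervalIntegrable (fun s => if s ≤ τ then a else b) volume x y := by
  have hm : Measurable (fun s : ℝ => if s ≤ τ then a else b) :=
    Measurable.ite measurableSet_Iic measurable_const measurable_const
  rw [intervalIntegrable_iff]
  refine Measure.integrableOn_of_bounded (M := max |a| |b|) measure_Ioc_lt_top.ne
    hm.aestronglyMeasurable ?_
  refine Filter.Eventually.of_forall fun s => ?_
  by_cases h : s ≤ τ
  · simp only [h, if_true, Real.norm_eq_abs]; exact le_max_left _ _
  · simp only [h, if_false, Real.norm_eq_abs]; exact le_max_right _ _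

lemma bang_integral {τ t : ℝ} (a b : ℝ) (hτ0 : 0 ≤ τ) (hτt : τ ≤ t) :
    (∫ s in (0:ℝ)..t, if s ≤ τ then a else b) = a * τ + b * (t - τ) := by
  rw [← integral_add_adjacent_intervals (bang_integrable τ a b 0 τ) (bang_integrable τ a b τ t)]
  have h1 : (∫ s in (0:ℝ)..τ, if s ≤ τ then a else b) = a * τ := by
    rw [integral_congr (g := fun _ => a) (fun s hs => by
      rw [Set.uIcc_of_le hτ0] at hs; simp [hs.2])]
    simp [mul_comm]
  have h2 : (∫ s in τ..t, if s ≤ τ then a else b) = b * (t - τ) := by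
    rw [intervalIntegral.integral_congr_ae (g := fun _ => b) (Filter.Eventually.of_forall fun s hs => by
      rw [Set.uIoc_of_le hτt] at hs; simp [not_le.mpr hs.1])]
    simp [mul_comm]
  rw [h1, h2]

lemma weight_mono {t σ : ℝ} (ht : 0 ≤ t) (f g : ℝ → ℝ)
    (hf : IntervalIntegrable f volume 0 t) (hg : IntervalIntegrable g volume 0 t)
    (heq : (∫ s in (0:ℝ)..t, f s) = ∫ s in (0:ℝ)..t, g s)
    (hpt : ∀ s ∈ Set.Icc (0:ℝ) t, 0 ≤ (σ - s) * (g s - f s)) :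
    (∫ s in (0:ℝ)..t, (t - s) * f s) ≤ ∫ s in (0:ℝ)..t, (t - s) * g s := by
  have hcont : ∀ c : ℝ, ContinuousOn (fun s : ℝ => c - s) (Set.uIcc 0 t) :=
    fun c => (continuous_const.sub continuous_id).continuousOn
  have hfi : IntervalIntegrable (fun s => (t - s) * f s) volume 0 t :=
    hf.continuousOn_mul (hcont t)
  have hgi : IntervalIntegrable (fun s => (t - s) * g s) volume 0 t :=
    hg.continuousOn_mul (hcont t)
  have hgf : IntervalIntegrable (fun s => g s - f s) volume 0 t := hg.sub hf
  have h2 : IntervalIntegrable (fun s => (σ - s) * (g s - f s)) volume 0 t :=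
    hgf.continuousOn_mul (hcont σ)
  have h3 : IntervalIntegrable (fun s => (t - σ) * (g s - f s)) volume 0 t :=
    hgf.const_mul _
  have key : 0 ≤ ∫ s in (0:ℝ)..t, (σ - s) * (g s - f s) := integral_nonneg ht hpt
  have h1 : (∫ s in (0:ℝ)..t, (t - s) * g s) - (∫ s in (0:ℝ)..t, (t - s) * f s)
      = (∫ s in (0:ℝ)..t, (σ - s) * (g s - f s))
        + (t - σ) * ((∫ s in (0:ℝ)..t, g s) - (∫ s in (0:ℝ)..t, f s)) := by
    rw [← integral_sub hgi hfi, ← integral_sub hg hf, ← intervalIntegral.integral_const_mul,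
      ← integral_add h2 h3]
    exact integral_congr fun s _ => by ring
  rw [heq] at h1
  simp only [sub_self, mul_zero, add_zero] at h1
  linarith

/-- For fixed terminal velocity, the maximal terminal position is obtained by
the bang-bang control `u_max` then `u_min`, the minimal by `u_min` then
`u_max`, and the set of achievable terminal positions is an interval. -/
theorem stmt_15 (v₀ v₁ u_min u_max t : ℝ) (hmm : u_min < u_max) (ht : 0 < t)
    (hI : u_min * t ≤ v₁ - v₀ ∧ v₁ - v₀ ≤ u_max * t)
    (τ τ' : ℝ)
    (hτ : τ = ((v₁ - v₀) - u_min * t) / (u_max - u_min))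
    (hτ' : τ' = (u_max * t - (v₁ - v₀)) / (u_max - u_min))
    (ubang ubang' : ℝ → ℝ)
    (hub : ∀ s, ubang s = if s ≤ τ then u_max else u_min)
    (hub' : ∀ s, ubang' s = if s ≤ τ' then u_min else u_max) :
    (∀ u : ℝ → ℝ, IntervalIntegrable u volume 0 t →
      (∀ s ∈ Set.Icc (0 : ℝ) t, u_min ≤ u s ∧ u s ≤ u_max) →
      (∫ s in (0:ℝ)..t, u s) = v₁ - v₀ →
      (∫ s in (0:ℝ)..t, (t - s) * ubang' s) ≤ (∫ s in (0:ℝ)..t, (t - s) * u s) ∧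
        (∫ s in (0:ℝ)..t, (t - s) * u s) ≤ ∫ s in (0:ℝ)..t, (t - s) * ubang s) ∧
    (∃ lo hi : ℝ,
      {y : ℝ | ∃ u : ℝ → ℝ, IntervalIntegrable u volume 0 t ∧
        (∀ s ∈ Set.Icc (0 : ℝ) t, u_min ≤ u s ∧ u s ≤ u_max) ∧
        (∫ s in (0:ℝ)..t, u s) = v₁ - v₀ ∧
        y = ∫ s in (0:ℝ)..t, (t - s) * u s} = Set.Icc lo hi) := by
  have hube : ubang = fun s => if s ≤ τ then u_max else u_min := funext hub
  have hube' : ubang' = fun s => if s ≤ τ' then u_min else u_max := funext hub'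
  subst hube hube'
  have hd : (0:ℝ) < u_max - u_min := sub_pos.mpr hmm
  have hτ0 : 0 ≤ τ := by
    rw [hτ]; exact div_nonneg (by linarith [hI.1]) hd.le
  have hτt : τ ≤ t := by
    rw [hτ, div_le_iff₀ hd]; nlinarith [hI.2]
  have hτ'0 : 0 ≤ τ' := by
    rw [hτ']; exact div_nonneg (by linarith [hI.2]) hd.le
  have hτ't : τ' ≤ t := by
    rw [hτ', div_le_iff₀ hd]; nlinarith [hI.1]
  have hib : IntervalIntegrable (fun s => if s ≤ τ then u_max else u_min) volume 0 t :=
    bang_integrable τ u_max u_min 0 t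
  have hib' : IntervalIntegrable (fun s => if s ≤ τ' then u_min else u_max) volume 0 t :=
    bang_integrable τ' u_min u_max 0 t
  have hIb : (∫ s in (0:ℝ)..t, if s ≤ τ then u_max else u_min) = v₁ - v₀ := by
    rw [bang_integral u_max u_min hτ0 hτt, hτ]; field_simp; ring
  have hIb' : (∫ s in (0:ℝ)..t, if s ≤ τ' then u_min else u_max) = v₁ - v₀ := by
    rw [bang_integral u_min u_max hτ'0 hτ't, hτ']; field_simp; ring
  have hbb : ∀ s ∈ Set.Icc (0 : ℝ) t,
      u_min ≤ (if s ≤ τ then u_max else u_min) ∧ (if s ≤ τ then u_max else u_min) ≤ u_max := by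
    intro s _; by_cases h : s ≤ τ <;> simp [h, hmm.le]
  have hbb' : ∀ s ∈ Set.Icc (0 : ℝ) t,
      u_min ≤ (if s ≤ τ' then u_min else u_max) ∧ (if s ≤ τ' then u_min else u_max) ≤ u_max := by
    intro s _; by_cases h : s ≤ τ' <;> simp [h, hmm.le]
  have hmain : ∀ u : ℝ → ℝ, IntervalIntegrable u volume 0 t →
      (∀ s ∈ Set.Icc (0 : ℝ) t, u_min ≤ u s ∧ u s ≤ u_max) →
      (∫ s in (0:ℝ)..t, u s) = v₁ - v₀ →
      (∫ s in (0:ℝ)..t, (t - s) * (if s ≤ τ' then u_min else u_max)) ≤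
        (∫ s in (0:ℝ)..t, (t - s) * u s) ∧
        (∫ s in (0:ℝ)..t, (t - s) * u s) ≤
          ∫ s in (0:ℝ)..t, (t - s) * (if s ≤ τ then u_max else u_min) := by
    intro u hui hubd hu3
    constructor
    · refine weight_mono (σ := τ') ht.le _ u hib' hui (hIb'.trans hu3.symm) ?_
      intro s hs
      by_cases h : s ≤ τ'
      · simp only [h, if_true]
        exact mul_nonneg (by linarith) (by linarith [(hubd s hs).1])
      · simp only [h, if_false]
        exact mul_nonneg_of_nonpos_of_nonpos (by linarith [not_le.mp h])
          (by linarith [(hubd s hs).2])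
    · refine weight_mono (σ := τ) ht.le u _ hui hib (hu3.trans hIb.symm) ?_
      intro s hs
      by_cases h : s ≤ τ
      · simp only [h, if_true]
        exact mul_nonneg (by linarith) (by linarith [(hubd s hs).2])
      · simp only [h, if_false]
        exact mul_nonneg_of_nonpos_of_nonpos (by linarith [not_le.mp h])
          (by linarith [(hubd s hs).1])
  refine ⟨hmain, ?_⟩
  set lo := ∫ s in (0:ℝ)..t, (t - s) * (if s ≤ τ' then u_min else u_max) with hlo
  set hi := ∫ s in (0:ℝ)..t, (t - s) * (if s ≤ τ then u_max else u_min) with hhi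
  have hlohi : lo ≤ hi := by
    have := hmain _ hib hbb hIb
    exact this.1.trans this.2
  refine ⟨lo, hi, ?_⟩
  have hcont : ContinuousOn (fun s : ℝ => t - s) (Set.uIcc 0 t) :=
    (continuous_const.sub continuous_id).continuousOn
  have htb : IntervalIntegrable (fun s => (t - s) * (if s ≤ τ then u_max else u_min))
      volume 0 t := hib.continuousOn_mul hcont
  have htb' : IntervalIntegrable (fun s => (t - s) * (if s ≤ τ' then u_min else u_max))
      volume 0 t := hib'.continuousOn_mul hcont
  ext y
  simp only [Set.mem_setOf_eq, Set.mem_Icc]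
  constructor
  · rintro ⟨u, h1, h2, h3, rfl⟩
    exact hmain u h1 h2 h3
  · rintro ⟨hy1, hy2⟩
    set c : ℝ := if hi = lo then 0 else (y - lo) / (hi - lo) with hc
    have hlolt : hi ≠ lo → lo < hi := fun h => lt_of_le_of_ne hlohi (fun h' => h h'.symm)
    have hc0 : 0 ≤ c := by
      rw [hc]; split_ifs with h
      · exact le_rfl
      · exact div_nonneg (by linarith) (by linarith [hlolt h])
    have hc1 : c ≤ 1 := by
      rw [hc]; split_ifs with h
      · exact zero_le_one
      · rw [div_le_one (by linarith [hlolt h])]; linarith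
    have hcy : lo + c * (hi - lo) = y := by
      rw [hc]; split_ifs with h
      · rw [h] at hy2 ⊢; simp; linarith
      · rw [div_mul_cancel₀ _ (sub_ne_zero.mpr h)]; ring
    refine ⟨fun s => (if s ≤ τ' then u_min else u_max)
        + c * ((if s ≤ τ then u_max else u_min) - (if s ≤ τ' then u_min else u_max)),
      hib'.add ((hib.sub hib').const_mul c), ?_, ?_, ?_⟩
    · intro s hs
      have ha := hbb s (Set.mem_Icc.mpr hs)
      have hb := hbb' s (Set.mem_Icc.mpr hs)
      obtain ⟨A, hA⟩ : ∃ A, A = (if s ≤ τ then u_max else u_min) := ⟨_, rfl⟩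
      obtain ⟨B, hB⟩ : ∃ B, B = (if s ≤ τ' then u_min else u_max) := ⟨_, rfl⟩
      rw [← hA] at ha
      rw [← hB] at hb
      simp only [← hA, ← hB]
      constructor
      · nlinarith [mul_nonneg hc0 (sub_nonneg.mpr ha.1),
          mul_nonneg (sub_nonneg.mpr hc1) (sub_nonneg.mpr hb.1)]
      · nlinarith [mul_nonneg hc0 (sub_nonneg.mpr ha.2),
          mul_nonneg (sub_nonneg.mpr hc1) (sub_nonneg.mpr hb.2)]
    · rw [integral_add hib' ((hib.sub hib').const_mul c), intervalIntegral.integral_const_mul,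
        integral_sub hib hib', hIb, hIb']
      ring
    · have hring : ∀ s : ℝ, (t - s) * ((if s ≤ τ' then u_min else u_max)
          + c * ((if s ≤ τ then u_max else u_min) - (if s ≤ τ' then u_min else u_max)))
          = (t - s) * (if s ≤ τ' then u_min else u_max)
            + c * ((t - s) * (if s ≤ τ then u_max else u_min)
              - (t - s) * (if s ≤ τ' then u_min else u_max)) := fun s => by ring
      rw [integral_congr (g := fun s => (t - s) * (if s ≤ τ' then u_min else u_max)
            + c * ((t - s) * (if s ≤ τ then u_max else u_min)
              - (t - s) * (if s ≤ τ' then u_min else u_max))) (fun s _ => hring s),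
        integral_add htb' ((htb.sub htb').const_mul c), intervalIntegral.integral_const_mul,
        integral_sub htb htb']
      rw [← hlo, ← hhi]
      linarith [hcy]
end
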